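/- arXiv:1810.00533 — 2 statements merged into one kernel-verified Lean document; each statement's English description precedes it below -/
import Mathlib

section
/- Let α be a composition of size N and length R with α ≠ 1^R, let k be the number of parts of α equal to 1 and δ_α the number of end parts of α equal to 1, and let S' = Σ_{j≥1} q'_j. In the ribbon diagram of α, there are exactly k − δ_α cells x with the property that there are at least two cells above x in the same column as x, and these k − δ_α cells occur in exactly S' distinct columns. -/
namespace RibbonNearEq

/-- A composition is a finite sequence of positive integers. -/
def IsComposition (α : List ℕ) : Prop := ∀ x ∈ α, 0 < x

/-- A partition is a weakly decreasing finite sequence of positive integers. -/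
def IsPartitionList (ν : List ℕ) : Prop :=
  ν.Pairwise (· ≥ ·) ∧ ∀ x ∈ ν, 0 < x

/-- The content of a tableau (given as its list of rows), as a monomial exponent
function: `contents T v` is the number of entries of `T` equal to `v`. -/
def contents (T : List (List ℕ)) : ℕ → ℕ := fun v => T.flatten.count v

/-- The rows of `T` have the lengths prescribed by the shape `sh`. -/
def RowsMatch (sh : List ℕ) (T : List (List ℕ)) : Prop :=
  T.length = sh.length ∧ ∀ i < T.length, (T.getD i []).length = sh.getD i 0

/-- Every row consists of positive integers and is weakly increasing. -/
def RowsSemistandard (T : List (List ℕ)) : Prop :=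
  ∀ row ∈ T, row.Pairwise (· ≤ ·) ∧ ∀ x ∈ row, 0 < x

/-- A semistandard Young tableau of (left-justified) partition shape `ν`:
rows weakly increase left to right, columns strictly increase top to bottom. -/
def IsSSYT (ν : List ℕ) (T : List (List ℕ)) : Prop :=
  RowsMatch ν T ∧ RowsSemistandard T ∧
  ∀ i, i + 1 < T.length → ∀ j < (T.getD (i + 1) []).length,
    (T.getD i []).getD j 0 < (T.getD (i + 1) []).getD j 0

/-- A semistandard Young tableau of ribbon shape `α` (rows listed from top to
bottom, the rightmost cell of row `i+1` directly below the leftmost cell of row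
`i`): rows weakly increase, and the leftmost entry of row `i` is strictly less
than the rightmost entry of row `i+1` (the two-cell columns strictly increase). -/
def IsRibbonSSYT (α : List ℕ) (T : List (List ℕ)) : Prop :=
  RowsMatch α T ∧ RowsSemistandard T ∧
  ∀ i, i + 1 < T.length →
    (T.getD i []).headI < (T.getD (i + 1) []).getLastD 0

/-- The Schur function `s_ν`, encoded by its monomial coefficient function: the
coefficient of `x_1^{m 1} x_2^{m 2} ⋯` is the number of SSYT of shape `ν` and
content `m`. -/
noncomputable def schur (ν : List ℕ) : (ℕ → ℕ) → ℤ :=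
  fun m => (Set.ncard {T : List (List ℕ) | IsSSYT ν T ∧ contents T = m} : ℤ)

/-- The ribbon Schur function `r_α`, encoded by its monomial coefficient function. -/
noncomputable def ribbon (α : List ℕ) : (ℕ → ℕ) → ℤ :=
  fun m => (Set.ncard {T : List (List ℕ) | IsRibbonSSYT α T ∧ contents T = m} : ℤ)

/-- `δ_α`: the number of end parts of `α` equal to `1`. -/
def deltaEnds (α : List ℕ) : ℕ :=
  (if α.headI = 1 then 1 else 0) + (if α.getLastD 0 = 1 then 1 else 0)

/-- The lengths `p_1, …, p_{R-k+1}` of the (possibly empty) runs of `1`'s in `α`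
before, between, and after the parts of `α` that are at least `2`. -/
def oneRuns : List ℕ → List ℕ
  | [] => [0]
  | x :: rest =>
    if x = 1 then
      match oneRuns rest with
      | [] => [1]
      | r :: rs => (r + 1) :: rs
    else 0 :: oneRuns rest

/-- `p'(α) = (p_1 - 1) p_2 ⋯ p_{R-k} (p_{R-k+1} - 1)`. -/
def p'List (α : List ℕ) : List ℤ :=
  let l : List ℤ := (oneRuns α).map fun n => (n : ℤ)
  (l.headI - 1) :: (l.tail.dropLast ++ [l.getLastD 0 - 1])

/-- `q'(α)`: `q'_j` is the number of entries of `p'(α)` equal to `j`. -/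
def q'Seq (α : List ℕ) : ℕ → ℕ := fun j => (p'List α).count ((j : ℤ))

/-- `S' = Σ_{j ≥ 1} q'_j`: the number of entries of `p'(α)` that are `≥ 1`. -/
def S'count (α : List ℕ) : ℕ := ((p'List α).filter fun x => decide (1 ≤ x)).length

/-- The leftmost column occupied by row `i` (0-based, rows from the top) of the
ribbon diagram of `α`, normalizing the bottom row to start in column `0`. -/
def leftmostCol (α : List ℕ) (i : ℕ) : ℕ :=
  (α.drop (i + 1)).sum - (α.length - 1 - i)

/-- The set of cells `(row, column)` of the ribbon diagram of `α`. -/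
def ribbonCells (α : List ℕ) : Set (ℕ × ℕ) :=
  {c | c.1 < α.length ∧ leftmostCol α c.1 ≤ c.2 ∧
    c.2 < leftmostCol α c.1 + α.getD c.1 0}

/-- Cells of the ribbon diagram of `α` having at least two cells above them in
the same column. -/
def deepCells (α : List ℕ) : Set (ℕ × ℕ) :=
  {x | x ∈ ribbonCells α ∧
    2 ≤ Set.ncard {y | y ∈ ribbonCells α ∧ y.2 = x.2 ∧ y.1 < x.1}}

lemma length_le_sum (l : List ℕ) (h : ∀ x ∈ l, 0 < x) : l.length ≤ l.sum := by
  induction l with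
  | nil => simp
  | cons x t ih =>
    have h1 := h x (by simp)
    have h2 := ih (fun y hy => h y (by simp [hy]))
    simp only [List.length_cons, List.sum_cons]
    omega

lemma sum_drop_ge (α : List ℕ) (hα : IsComposition α) (j : ℕ) :
    α.length - j ≤ (α.drop j).sum := by
  have h1 : (α.drop j).length ≤ (α.drop j).sum :=
    length_le_sum _ (fun x hx => hα x (List.mem_of_mem_drop hx))
  simpa using h1

lemma getD_pos (α : List ℕ) (hα : IsComposition α) {i : ℕ} (h : i < α.length) :
    1 ≤ α.getD i 0 := by
  rw [List.getD_eq_getElem _ _ h]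
  exact hα _ (List.getElem_mem h)

lemma L_succ (α : List ℕ) (hα : IsComposition α) {i : ℕ} (h : i + 1 < α.length) :
    leftmostCol α (i + 1) + α.getD (i + 1) 0 = leftmostCol α i + 1 := by
  have hd : α.drop (i + 1) = α[i + 1] :: α.drop (i + 1 + 1) := List.drop_eq_getElem_cons h
  have hg : α.getD (i + 1) 0 = α[i + 1] := List.getD_eq_getElem _ _ h
  have h1 : α.length - (i + 1 + 1) ≤ (α.drop (i + 1 + 1)).sum := sum_drop_ge α hα _
  have h2 : 1 ≤ α[i + 1] := hα _ (List.getElem_mem h)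
  unfold leftmostCol
  rw [hd, hg, List.sum_cons]
  omega

lemma L_succ' (α : List ℕ) (hα : IsComposition α) {i : ℕ} (h0 : 1 ≤ i) (h : i < α.length) :
    leftmostCol α i + α.getD i 0 = leftmostCol α (i - 1) + 1 := by
  obtain ⟨j, rfl⟩ : ∃ j, i = j + 1 := ⟨i - 1, by omega⟩
  simpa using L_succ α hα h

lemma L_antitone (α : List ℕ) (hα : IsComposition α) {i j : ℕ} (hij : i ≤ j)
    (hj : j < α.length) : leftmostCol α j ≤ leftmostCol α i := by
  induction j with
  | zero => simp [Nat.le_zero.mp hij]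
  | succ n ih =>
    rcases Nat.lt_or_ge i (n + 1) with h | h
    · have h1 := L_succ α hα hj
      have h2 := getD_pos α hα hj
      exact le_trans (by omega) (ih (by omega) (by omega))
    · have : i = n + 1 := by omega
      subst this; exact le_rfl

lemma ribbon_finite (α : List ℕ) : (ribbonCells α).Finite := by
  apply Set.Finite.subset ((Set.finite_Iio α.length).prod (Set.finite_Iio (α.sum + 1)))
  rintro ⟨r, c⟩ ⟨h1, h2, h3⟩
  simp only at h1 h2 h3
  have hd : α.drop r = α[r] :: α.drop (r + 1) := List.drop_eq_getElem_cons h1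
  have hg : α.getD r 0 = α[r] := List.getD_eq_getElem _ _ h1
  have hs : (α.drop r).sum ≤ α.sum := by
    calc (α.drop r).sum ≤ (α.take r).sum + (α.drop r).sum := Nat.le_add_left _ _
    _ = α.sum := by rw [← List.sum_append, List.take_append_drop]
  have hL : leftmostCol α r ≤ (α.drop (r + 1)).sum := Nat.sub_le _ _
  rw [hd, List.sum_cons] at hs
  constructor
  · exact h1
  · simp only [Set.mem_Iio]
    omega

lemma deep_iff (α : List ℕ) (hα : IsComposition α) (r c : ℕ) :
    (r, c) ∈ deepCells α ↔
      2 ≤ r ∧ r < α.length ∧ α.getD (r - 1) 0 = 1 ∧ c = leftmostCol α (r - 1) := by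
  constructor
  · rintro ⟨⟨hr, hcl, hcu⟩, hcard⟩
    simp only at hr hcl hcu hcard
    have key : ∀ i1 i2 : ℕ, i1 < i2 → i2 < r →
        leftmostCol α i1 ≤ c → c < leftmostCol α i1 + α.getD i1 0 →
        leftmostCol α i2 ≤ c → c < leftmostCol α i2 + α.getD i2 0 →
        2 ≤ r ∧ r < α.length ∧ α.getD (r - 1) 0 = 1 ∧ c = leftmostCol α (r - 1) := by
      intro i1 i2 h12 h2r hl1 hu1 hl2 hu2
      have h2 : 2 ≤ r := by omega
      have hL : leftmostCol α r + α.getD r 0 = leftmostCol α (r - 1) + 1 :=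
        L_succ' α hα (by omega) hr
      have hc1 : c ≤ leftmostCol α (r - 1) := by omega
      have hm2 : leftmostCol α (r - 1) ≤ leftmostCol α i2 :=
        L_antitone α hα (by omega) (by omega)
      have hEi2 : leftmostCol α i2 = c := by omega
      have hEr1 : leftmostCol α (r - 1) = c := by omega
      have hm1 : leftmostCol α i2 ≤ leftmostCol α i1 :=
        L_antitone α hα (by omega) (by omega)
      have hEi1 : leftmostCol α i1 = c := by omega
      have hm3 : leftmostCol α (r - 2) ≤ leftmostCol α i1 :=
        L_antitone α hα (by omega) (by omega)
      have hm4 : leftmostCol α (r - 1) ≤ leftmostCol α (r - 2) :=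
        L_antitone α hα (by omega) (by omega)
      have hEr2 : leftmostCol α (r - 2) = c := by omega
      have hL2 : leftmostCol α (r - 1) + α.getD (r - 1) 0 = leftmostCol α (r - 1 - 1) + 1 :=
        L_succ' α hα (by omega) (by omega)
      have he : r - 1 - 1 = r - 2 := by omega
      rw [he] at hL2
      exact ⟨h2, hr, by omega, by omega⟩
    set s : Set (ℕ × ℕ) := {y | y ∈ ribbonCells α ∧ y.2 = c ∧ y.1 < r} with hs
    obtain ⟨y1, hy1⟩ : s.Nonempty := Set.nonempty_of_ncard_ne_zero (by omega)
    obtain ⟨y2, hy2, hne⟩ : ∃ b ∈ s, b ≠ y1 := Set.exists_ne_of_one_lt_ncard (by omega) y1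
    obtain ⟨⟨hy1r, hy1l, hy1u⟩, hy1c, hy1lt⟩ := hy1
    obtain ⟨⟨hy2r, hy2l, hy2u⟩, hy2c, hy2lt⟩ := hy2
    have hrow : y1.1 ≠ y2.1 := by
      intro h
      exact hne (Prod.ext (h.symm) (hy2c.trans hy1c.symm))
    rw [hy1c] at hy1l hy1u
    rw [hy2c] at hy2l hy2u
    rcases Nat.lt_or_ge y1.1 y2.1 with h | h
    · exact key y1.1 y2.1 h hy2lt hy1l hy1u hy2l hy2u
    · exact key y2.1 y1.1 (by omega) hy1lt hy2l hy2u hy1l hy1u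
  · rintro ⟨h2, hr, h1, hc⟩
    have hL1 : leftmostCol α r + α.getD r 0 = leftmostCol α (r - 1) + 1 :=
      L_succ' α hα (by omega) hr
    have hL2 : leftmostCol α (r - 1) + α.getD (r - 1) 0 = leftmostCol α (r - 1 - 1) + 1 :=
      L_succ' α hα (by omega) (by omega)
    have he : r - 1 - 1 = r - 2 := by omega
    rw [he] at hL2
    have hanti : leftmostCol α r ≤ leftmostCol α (r - 1) := L_antitone α hα (by omega) hr
    have har2 : 1 ≤ α.getD (r - 2) 0 := getD_pos α hα (by omega)
    have hmem : (r, c) ∈ ribbonCells α := by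
      refine ⟨hr, ?_, ?_⟩ <;> simp only <;> omega
    refine ⟨hmem, ?_⟩
    have hsfin : Set.Finite {y | y ∈ ribbonCells α ∧ y.2 = (r, c).2 ∧ y.1 < (r, c).1} :=
      (ribbon_finite α).subset (fun y hy => hy.1)
    have hm1 : ((r - 1 : ℕ), c) ∈ {y : ℕ × ℕ | y ∈ ribbonCells α ∧ y.2 = (r, c).2 ∧ y.1 < (r, c).1} := by
      refine ⟨⟨by simp only; omega, ?_, ?_⟩, rfl, by simp only; omega⟩ <;> simp only <;> omega
    have hm2 : ((r - 2 : ℕ), c) ∈ {y : ℕ × ℕ | y ∈ ribbonCells α ∧ y.2 = (r, c).2 ∧ y.1 < (r, c).1} := by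
      refine ⟨⟨by simp only; omega, ?_, ?_⟩, rfl, by simp only; omega⟩ <;> simp only <;> omega
    have hlt : 1 < Set.ncard {y : ℕ × ℕ | y ∈ ribbonCells α ∧ y.2 = (r, c).2 ∧ y.1 < (r, c).1} :=
      (Set.one_lt_ncard_iff hsfin).mpr ⟨_, _, hm1, hm2, by simp only [ne_eq, Prod.mk.injEq]; omega⟩
    exact hlt

def Tfin (α : List ℕ) : Finset ℕ :=
  (Finset.range α.length).filter fun r => 2 ≤ r ∧ α.getD (r - 1) 0 = 1

def RepFin (α : List ℕ) : Finset ℕ :=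
  (Finset.range α.length).filter fun r =>
    2 ≤ r ∧ α.getD (r - 1) 0 = 1 ∧ (r = 2 ∨ α.getD (r - 2) 0 ≠ 1)

lemma deep_eq_image (α : List ℕ) (hα : IsComposition α) :
    deepCells α = (fun r => (r, leftmostCol α (r - 1))) '' ↑(Tfin α) := by
  ext ⟨r, c⟩
  rw [deep_iff α hα]
  simp only [Set.mem_image, Finset.coe_filter, Set.mem_setOf_eq, Finset.mem_range, Tfin,
    Finset.mem_coe, Finset.mem_filter, Prod.mk.injEq]
  constructor
  · rintro ⟨h2, hr, h1, hc⟩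
    exact ⟨r, ⟨hr, h2, h1⟩, rfl, hc.symm⟩
  · rintro ⟨x, ⟨hr, h2, h1⟩, rfl, rfl⟩
    exact ⟨h2, hr, h1, rfl⟩

lemma exists_rep (α : List ℕ) (hα : IsComposition α) :
    ∀ r, 2 ≤ r → r < α.length → α.getD (r - 1) 0 = 1 →
      ∃ r', r' ∈ RepFin α ∧ leftmostCol α (r' - 1) = leftmostCol α (r - 1) := by
  intro r
  induction r using Nat.strong_induction_on with
  | _ r ih =>
    intro h2 hr h1
    by_cases hc : r = 2 ∨ α.getD (r - 2) 0 ≠ 1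
    · exact ⟨r, Finset.mem_filter.mpr ⟨Finset.mem_range.mpr hr, h2, h1, hc⟩, rfl⟩
    · push_neg at hc
      obtain ⟨hc2, hc1⟩ := hc
      have he : r - 1 - 1 = r - 2 := by omega
      obtain ⟨r', hm, hEq⟩ := ih (r - 1) (by omega) (by omega) (by omega) (by rw [he]; exact hc1)
      refine ⟨r', hm, ?_⟩
      rw [hEq]
      have hL2 : leftmostCol α (r - 1) + α.getD (r - 1) 0 = leftmostCol α (r - 1 - 1) + 1 :=
        L_succ' α hα (by omega) (by omega)
      omega

lemma rep_injOn (α : List ℕ) (hα : IsComposition α) :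
    Set.InjOn (fun r => leftmostCol α (r - 1)) ↑(RepFin α) := by
  have key : ∀ r s : ℕ, r ∈ RepFin α → s ∈ RepFin α → r < s →
      leftmostCol α (s - 1) < leftmostCol α (r - 1) := by
    intro r s hrm hsm hrs
    simp only [RepFin, Finset.mem_filter, Finset.mem_range] at hrm hsm
    obtain ⟨hrlen, hr2, hr1, _⟩ := hrm
    obtain ⟨hslen, hs2, hs1, hsrep⟩ := hsm
    have hs3 : 3 ≤ s := by omega
    have hsne : α.getD (s - 2) 0 ≠ 1 := by
      rcases hsrep with h | h
      · omega
      · exact h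
    have hge2 : 2 ≤ α.getD (s - 2) 0 := by
      have := getD_pos α hα (show s - 2 < α.length by omega)
      omega
    have hrs2 : r ≤ s - 2 := by
      by_contra h
      have : r = s - 1 := by omega
      have : r - 1 = s - 2 := by omega
      rw [this] at hr1
      exact hsne hr1
    have hL : leftmostCol α (s - 2) + α.getD (s - 2) 0 = leftmostCol α (s - 2 - 1) + 1 :=
      L_succ' α hα (by omega) (by omega)
    have he : s - 2 - 1 = s - 3 := by omega
    rw [he] at hL
    have h1 : leftmostCol α (s - 3) ≤ leftmostCol α (r - 1) :=
      L_antitone α hα (by omega) (by omega)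
    have h2' : leftmostCol α (s - 1) ≤ leftmostCol α (s - 2) :=
      L_antitone α hα (by omega) (by omega)
    omega
  intro r hr s hs hEq
  simp only at hEq
  by_contra hne
  rcases Nat.lt_or_ge r s with h | h
  · exact absurd hEq (by have := key r s hr hs h; omega)
  · exact absurd hEq (by have := key s r hs hr (by omega); omega)

lemma snd_image_eq (α : List ℕ) (hα : IsComposition α) :
    (fun r => leftmostCol α (r - 1)) '' ↑(Tfin α)
      = (fun r => leftmostCol α (r - 1)) '' ↑(RepFin α) := by
  apply Set.Subset.antisymm
  · rintro x ⟨r, hr, rfl⟩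
    simp only [Finset.mem_coe, Tfin, Finset.mem_filter, Finset.mem_range] at hr
    obtain ⟨hrlen, h2, h1⟩ := hr
    obtain ⟨r', hm, hEq⟩ := exists_rep α hα r h2 hrlen h1
    exact ⟨r', hm, hEq⟩
  · apply Set.image_mono
    intro r hr
    simp only [Finset.mem_coe, RepFin, Tfin, Finset.mem_filter, Finset.mem_range] at *
    tauto

lemma ncard_deep (α : List ℕ) (hα : IsComposition α) :
    (deepCells α).ncard = (Tfin α).card := by
  rw [deep_eq_image α hα, Set.ncard_image_of_injOn (fun a _ b _ h => congrArg Prod.fst h),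
    Set.ncard_coe_finset]

lemma ncard_snd_deep (α : List ℕ) (hα : IsComposition α) :
    (Prod.snd '' deepCells α).ncard = (RepFin α).card := by
  rw [deep_eq_image α hα, Set.image_image]
  simp only
  rw [snd_image_eq α hα, Set.ncard_image_of_injOn (rep_injOn α hα), Set.ncard_coe_finset]

/-- number of entries `≥ 1`. -/

def countPos (w : List ℕ) : ℕ := (w.filter fun n => decide (1 ≤ n)).length

def runsB : Bool → List ℕ → ℕ
  | _, [] => 0
  | b, x :: s => (if x = 1 ∧ b = false then 1 else 0) + runsB (decide (x = 1)) s

lemma oneRuns_ne_nil (l : List ℕ) : oneRuns l ≠ [] := by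
  induction l with
  | nil => simp [oneRuns]
  | cons x s ih =>
    by_cases hx : x = 1
    · subst hx
      cases h : oneRuns s with
      | nil => exact absurd h ih
      | cons r rs => simp [oneRuns, h]
    · simp [oneRuns, hx]

lemma oneRuns_cons_one (s : List ℕ) (r : ℕ) (rs : List ℕ) (h : oneRuns s = r :: rs) :
    oneRuns (1 :: s) = (r + 1) :: rs := by
  simp [oneRuns, h]

lemma oneRuns_cons_ne (x : ℕ) (s : List ℕ) (hx : x ≠ 1) :
    oneRuns (x :: s) = 0 :: oneRuns s := by
  simp [oneRuns, hx]

lemma oneRuns_tail_eq_nil_iff (l : List ℕ) :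
    (oneRuns l).tail = [] ↔ l = List.replicate l.length 1 := by
  induction l with
  | nil => simp [oneRuns]
  | cons x s ih =>
    by_cases hx : x = 1
    · subst hx
      cases h : oneRuns s with
      | nil => exact absurd h (oneRuns_ne_nil s)
      | cons r rs =>
        rw [oneRuns_cons_one s r rs h]
        rw [h] at ih
        simp only [List.tail_cons] at ih ⊢
        simp only [List.length_cons, List.replicate_succ, List.cons.injEq, true_and]
        exact ih
    · rw [oneRuns_cons_ne x s hx]
      simp only [List.tail_cons, List.length_cons, List.replicate_succ, List.cons.injEq]
      constructor
      · intro h; exact absurd h (oneRuns_ne_nil s)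
      · intro ⟨h1, _⟩; exact absurd h1 hx

lemma oneRuns_concat_ne (l : List ℕ) (z : ℕ) (hz : z ≠ 1) :
    oneRuns (l ++ [z]) = oneRuns l ++ [0] := by
  induction l with
  | nil => simp [oneRuns, hz]
  | cons x s ih =>
    by_cases hx : x = 1
    · subst hx
      cases h : oneRuns s with
      | nil => exact absurd h (oneRuns_ne_nil s)
      | cons r rs =>
        have h2 : oneRuns (s ++ [z]) = r :: (rs ++ [0]) := by rw [ih, h]; simp
        rw [List.cons_append, oneRuns_cons_one _ _ _ h2, oneRuns_cons_one _ _ _ h]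
        simp
    · rw [List.cons_append, oneRuns_cons_ne x _ hx, oneRuns_cons_ne x _ hx, ih]
      simp

lemma oneRuns_concat_one (l : List ℕ) :
    oneRuns (l ++ [1]) = (oneRuns l).dropLast ++ [(oneRuns l).getLastD 0 + 1] := by
  induction l with
  | nil => simp [oneRuns]
  | cons x s ih =>
    by_cases hx : x = 1
    · subst hx
      cases h : oneRuns s with
      | nil => exact absurd h (oneRuns_ne_nil s)
      | cons r rs =>
        rw [h] at ih
        cases rs with
        | nil =>
          simp only [List.dropLast_singleton, List.nil_append, List.getLastD_eq_getLast?, List.getLast?_singleton, Option.getD_some] at ih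
          rw [List.cons_append, oneRuns_cons_one _ _ _ ih, oneRuns_cons_one _ _ _ h]
          simp
        | cons r2 rs2 =>
          have hd : (r :: r2 :: rs2).dropLast = r :: (r2 :: rs2).dropLast := rfl
          have hg : (r :: r2 :: rs2).getLastD 0 = (r2 :: rs2).getLastD 0 := by
            simp [List.getLastD_cons]
          rw [hd, hg] at ih
          rw [List.cons_append, oneRuns_cons_one _ _ _ (by rw [ih]; rfl),
            oneRuns_cons_one _ _ _ h]
          simp [List.getLastD_cons]
    · rw [List.cons_append, oneRuns_cons_ne x _ hx, oneRuns_cons_ne x _ hx, ih]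
      cases h : oneRuns s with
      | nil => exact absurd h (oneRuns_ne_nil s)
      | cons r rs =>
        simp [List.getLastD_cons]

lemma countPos_cons (x : ℕ) (w : List ℕ) :
    countPos (x :: w) = (if 1 ≤ x then 1 else 0) + countPos w := by
  simp only [countPos, List.filter_cons]
  split_ifs with h1 h2 h3 <;> simp_all <;> omega

lemma countPos_append (u v : List ℕ) : countPos (u ++ v) = countPos u + countPos v := by
  simp [countPos, List.filter_append]

lemma concat_decomp (w : List ℕ) (h : w ≠ []) : w = w.dropLast ++ [w.getLastD 0] := by
  induction w using List.reverseRecOn with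
  | nil => exact absurd rfl h
  | append_singleton u x ih => rw [List.dropLast_concat, List.getLastD_concat]

lemma getLastD_of_ne_nil (l : List ℕ) (h : l ≠ []) (a b : ℕ) : l.getLastD a = l.getLastD b := by
  induction l using List.reverseRecOn with
  | nil => exact absurd rfl h
  | append_singleton u x _ => rw [List.getLastD_concat, List.getLastD_concat]

lemma getLastD_cons_ne_nil (x : ℕ) (l : List ℕ) (h : l ≠ []) :
    (x :: l).getLastD 0 = l.getLastD 0 := by
  rw [List.getLastD_cons]
  exact getLastD_of_ne_nil l h x 0

lemma countPos_oneRuns_dropLast (l : List ℕ) :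
    countPos (oneRuns l.dropLast) =
      countPos (oneRuns l).dropLast + (if 2 ≤ (oneRuns l).getLastD 0 then 1 else 0) := by
  rcases List.eq_nil_or_concat l with rfl | ⟨u, x, rfl⟩
  · simp [oneRuns, countPos]
  · simp only [List.concat_eq_append]
    rw [List.dropLast_concat]
    by_cases hx : x = 1
    · subst hx
      rw [oneRuns_concat_one u, List.dropLast_concat, List.getLastD_concat]
      have hd := concat_decomp (oneRuns u) (oneRuns_ne_nil u)
      conv_lhs => rw [hd]
      rw [countPos_append]
      congr 1
      rw [countPos_cons]
      have : countPos [] = 0 := rfl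
      rw [this]
      split_ifs <;> omega
    · rw [oneRuns_concat_ne u x hx, List.dropLast_concat, List.getLastD_concat]
      simp

lemma runsB_eq (m : List ℕ) :
    runsB false m = countPos (oneRuns m) ∧ runsB true m = countPos (oneRuns m).tail := by
  induction m with
  | nil => simp [runsB, oneRuns, countPos]
  | cons x s ih =>
    by_cases hx : x = 1
    · subst hx
      cases h : oneRuns s with
      | nil => exact absurd h (oneRuns_ne_nil s)
      | cons r rs =>
        rw [h] at ih
        rw [oneRuns_cons_one _ _ _ h]
        simp only [List.tail_cons] at ih ⊢
        constructor
        · simp only [runsB, decide_true]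
          rw [countPos_cons, ih.2]
          simp
        · simp only [runsB, decide_true]
          rw [ih.2]
          simp
    · rw [oneRuns_cons_ne x s hx]
      simp only [List.tail_cons]
      have hd : decide (x = 1) = false := by simp [hx]
      constructor
      · show (if x = 1 ∧ false = false then 1 else 0) + runsB (decide (x = 1)) s = _
        rw [hd, ih.1, countPos_cons]
        simp [hx]
      · show (if x = 1 ∧ true = false then 1 else 0) + runsB (decide (x = 1)) s = _
        rw [hd, ih.1]
        simp [hx]

lemma countPos_oneRuns_mid (α : List ℕ) (hne : α ≠ [])
    (htail : (oneRuns α).tail ≠ []) :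
    countPos (oneRuns (α.tail.dropLast)) =
      (if 2 ≤ (oneRuns α).headI then 1 else 0) + countPos ((oneRuns α).tail.dropLast)
        + (if 2 ≤ (oneRuns α).getLastD 0 then 1 else 0) := by
  obtain ⟨x, s, rfl⟩ := List.exists_cons_of_ne_nil hne
  simp only [List.tail_cons]
  rw [countPos_oneRuns_dropLast s]
  by_cases hx : x = 1
  · subst hx
    cases h : oneRuns s with
    | nil => exact absurd h (oneRuns_ne_nil s)
    | cons r rs =>
      rw [oneRuns_cons_one _ _ _ h] at htail ⊢
      simp only [List.tail_cons, List.headI] at htail ⊢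
      rw [List.dropLast_cons_of_ne_nil htail, countPos_cons,
        getLastD_cons_ne_nil r rs htail, getLastD_cons_ne_nil (r + 1) rs htail]
      by_cases hr : 1 ≤ r <;> simp only [hr, show (2 ≤ r + 1) ↔ (1 ≤ r) from by omega, ↓reduceIte]
  · rw [oneRuns_cons_ne _ _ hx]
    simp only [List.tail_cons, List.headI]
    rw [getLastD_cons_ne_nil 0 _ (oneRuns_ne_nil s)]
    simp

lemma castList_eq (q : List ℕ) :
    (q.map fun n => (n : ℤ)) = q.map (fun n : ℕ => (n : ℤ)) := by
  induction q with
  | nil => rfl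
  | cons x q ih =>
    rw [List.map_cons, ← ih]
    rfl

lemma length_filter_map_cast (q : List ℕ) :
    ((q.map fun n : ℕ => (n : ℤ)).filter fun x => decide (1 ≤ x)).length = countPos q := by
  induction q with
  | nil => simp [countPos]
  | cons x q ih =>
    rw [List.map_cons, List.filter_cons, countPos_cons]
    by_cases h : 1 ≤ x
    · rw [if_pos (by simpa using h), if_pos h, List.length_cons, ih]
      omega
    · rw [if_neg (by simpa using h), if_neg h, ih]
      omega

lemma S'count_eq (α : List ℕ) (htail : (oneRuns α).tail ≠ []) :
    S'count α = (if 2 ≤ (oneRuns α).headI then 1 else 0) + countPos ((oneRuns α).tail.dropLast)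
      + (if 2 ≤ (oneRuns α).getLastD 0 then 1 else 0) := by
  cases hw : oneRuns α with
  | nil => exact absurd hw (oneRuns_ne_nil α)
  | cons h tl =>
    rw [hw] at htail
    simp only [List.tail_cons] at htail
    obtain ⟨q, g, htl⟩ := (List.eq_nil_or_concat tl).resolve_left htail
    rw [List.concat_eq_append] at htl
    subst htl
    simp only [S'count, p'List, castList_eq]
    rw [hw]
    simp only [List.map_cons, List.map_append, List.map_nil, List.headI_cons, List.tail_cons]
    rw [List.dropLast_concat]
    have h2 : ((h : ℤ) :: ((q.map fun n : ℕ => (n : ℤ)) ++ [(g : ℤ)])).getLastD 0 = (g : ℤ) := by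
      rw [← List.cons_append, List.getLastD_concat]
    rw [h2]
    rw [List.dropLast_concat]
    have h4 : (h :: (q ++ [g])).getLastD 0 = g := by
      rw [← List.cons_append, List.getLastD_concat]
    rw [h4]
    rw [List.filter_cons, List.filter_append]
    have e2 : (List.filter (fun x => decide (1 ≤ x)) [(g : ℤ) - 1]).length
        = if 2 ≤ g then 1 else 0 := by
      by_cases hg : 2 ≤ g
      · simp [List.filter, show (1 : ℤ) ≤ (g : ℤ) - 1 by omega, hg]
      · simp [List.filter, show ¬ (1 : ℤ) ≤ (g : ℤ) - 1 by omega, hg]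
    by_cases hh : 2 ≤ h
    · rw [if_pos (by simp only [decide_eq_true_eq]; omega : decide (1 ≤ (h : ℤ) - 1) = true)]
      simp only [hh, ↓reduceIte]
      rw [List.length_cons, List.length_append, length_filter_map_cast, e2]
      omega
    · rw [if_neg (by simp only [decide_eq_true_eq]; omega : ¬ decide (1 ≤ (h : ℤ) - 1) = true)]
      simp only [hh, ↓reduceIte]
      rw [List.length_append, length_filter_map_cast, e2]
      omega

lemma S'_eq_runs (α : List ℕ) (hα1 : α ≠ List.replicate α.length 1) :
    S'count α = runsB false (α.tail.dropLast) := by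
  have hne : α ≠ [] := by
    intro h
    exact hα1 (by simp [h])
  have htail : (oneRuns α).tail ≠ [] := fun h => hα1 ((oneRuns_tail_eq_nil_iff α).mp h)
  rw [(runsB_eq _).1, countPos_oneRuns_mid α hne htail, S'count_eq α htail]

lemma len_mid (α : List ℕ) : α.tail.dropLast.length = α.length - 2 := by
  rw [List.length_dropLast, List.length_tail]
  omega

lemma getD_mid (α : List ℕ) (i : ℕ) (h : i < α.tail.dropLast.length) :
    α.tail.dropLast.getD i 0 = α.getD (i + 1) 0 := by
  have hlen : α.tail.dropLast.length = α.length - 2 := len_mid α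
  have h2 : i + 1 < α.length := by omega
  rw [List.getD_eq_getElem _ _ h, List.getD_eq_getElem _ _ h2]
  rw [List.getElem_dropLast, List.getElem_tail]

lemma card_filter_getD (m : List ℕ) :
    ((Finset.range m.length).filter (fun i => m.getD i 0 = 1)).card = m.count 1 := by
  induction m with
  | nil => simp
  | cons x t ih =>
    rw [Finset.card_filter, List.length_cons, Finset.sum_range_succ']
    have h1 : ∀ i : ℕ, (if (x :: t).getD (i + 1) 0 = 1 then (1 : ℕ) else 0)
        = (if t.getD i 0 = 1 then (1 : ℕ) else 0) := fun i => by rw [List.getD_cons_succ]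
    simp only [h1]
    rw [← Finset.card_filter, ih, List.count_cons]
    simp only [List.getD_cons_zero, beq_iff_eq]

def predRun (m : List ℕ) (b : Bool) (i : ℕ) : Prop :=
  m.getD i 0 = 1 ∧ (if i = 0 then b = false else m.getD (i - 1) 0 ≠ 1)

instance (m : List ℕ) (b : Bool) (i : ℕ) : Decidable (predRun m b i) := by
  unfold predRun
  infer_instance

lemma card_filter_runs (m : List ℕ) (b : Bool) :
    ((Finset.range m.length).filter (predRun m b)).card = runsB b m := by
  induction m generalizing b with
  | nil => simp [runsB]
  | cons x t ih =>
    rw [Finset.card_filter, List.length_cons, Finset.sum_range_succ']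
    have h1 : ∀ i : ℕ, (if predRun (x :: t) b (i + 1) then (1 : ℕ) else 0)
        = (if predRun t (decide (x = 1)) i then (1 : ℕ) else 0) := by
      intro i
      have he : predRun (x :: t) b (i + 1) ↔ predRun t (decide (x = 1)) i := by
        unfold predRun
        cases i with
        | zero =>
          simp only [List.getD_cons_succ, List.getD_cons_zero, Nat.add_sub_cancel]
          rw [if_neg (by omega)]
          simp only [if_true, eq_self_iff_true, if_pos trivial]
          simp [decide_eq_false_iff_not]
        | succ j =>
          simp only [List.getD_cons_succ, Nat.add_sub_cancel]
          rw [if_neg (by omega), if_neg (by omega)]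
      exact if_congr he rfl rfl
    simp only [h1]
    rw [← Finset.card_filter, ih]
    have h0 : predRun (x :: t) b 0 ↔ (x = 1 ∧ b = false) := by
      unfold predRun
      simp
    rw [show runsB b (x :: t)
      = (if x = 1 ∧ b = false then 1 else 0) + runsB (decide (x = 1)) t from rfl]
    rw [if_congr h0 rfl rfl]
    split_ifs <;> omega

lemma count_tail_dropLast (α : List ℕ) (hα1 : α ≠ List.replicate α.length 1) :
    α.tail.dropLast.count 1 = α.count 1 - deltaEnds α := by
  cases α with
  | nil => simp at hα1
  | cons x s =>
    rcases List.eq_nil_or_concat s with rfl | ⟨u, g, hs⟩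
    · have hx : x ≠ 1 := by
        intro h
        subst h
        exact hα1 rfl
      simp [deltaEnds, hx, List.count_cons, Ne.symm hx]
    · rw [List.concat_eq_append] at hs
      subst hs
      have h1 : (x :: (u ++ [g])).tail.dropLast = u := by
        simp only [List.tail_cons]
        exact List.dropLast_concat ..
      rw [h1]
      have hlast : (x :: (u ++ [g])).getLastD 0 = g := by
        rw [← List.cons_append, List.getLastD_concat]
      rw [deltaEnds, hlast]
      simp only [List.headI_cons, List.count_cons, List.count_append, List.count_nil,
        beq_iff_eq]
      by_cases hx : x = 1 <;> by_cases hg : g = 1 <;> simp only [hx, hg, ↓reduceIte] <;> omega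

lemma Tfin_card (α : List ℕ) : (Tfin α).card = α.tail.dropLast.count 1 := by
  rw [← card_filter_getD (α.tail.dropLast)]
  have hlen := len_mid α
  refine Finset.card_bij' (fun r _ => r - 2) (fun i _ => i + 2) ?hi ?hj ?hl ?hr
  case hi =>
    intro r hr
    simp only [Tfin, Finset.mem_filter, Finset.mem_range] at hr ⊢
    obtain ⟨hrlen, h2, h1⟩ := hr
    have hm : r - 2 < α.tail.dropLast.length := by omega
    refine ⟨hm, ?_⟩
    rw [getD_mid α _ hm, show r - 2 + 1 = r - 1 from by omega]
    exact h1
  case hj =>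
    intro i hi
    simp only [Tfin, Finset.mem_filter, Finset.mem_range] at hi ⊢
    obtain ⟨hilen, h1⟩ := hi
    refine ⟨by omega, by omega, ?_⟩
    rw [show i + 2 - 1 = i + 1 from by omega, ← getD_mid α i (by omega)]
    exact h1
  case hl =>
    intro r hr
    simp only [Tfin, Finset.mem_filter, Finset.mem_range] at hr
    show r - 2 + 2 = r
    omega
  case hr =>
    intro i hi
    show i + 2 - 2 = i
    omega

lemma RepFin_card (α : List ℕ) : (RepFin α).card = runsB false (α.tail.dropLast) := by
  rw [← card_filter_runs (α.tail.dropLast) false]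
  have hlen := len_mid α
  refine Finset.card_bij' (fun r _ => r - 2) (fun i _ => i + 2) ?hi ?hj ?hl ?hr
  case hi =>
    intro r hr
    simp only [RepFin, Finset.mem_filter, Finset.mem_range] at hr
    obtain ⟨hrlen, h2, h1, hrep⟩ := hr
    have hm : r - 2 < α.tail.dropLast.length := by omega
    simp only [Finset.mem_filter, Finset.mem_range]
    refine ⟨hm, ?_, ?_⟩
    · rw [getD_mid α _ hm, show r - 2 + 1 = r - 1 from by omega]
      exact h1
    · by_cases hr2 : r = 2
      · rw [if_pos (by omega)]
      · rw [if_neg (by omega)]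
        have h3 : 3 ≤ r := by omega
        rw [show r - 2 - 1 = r - 3 from by omega]
        rw [getD_mid α _ (by omega), show r - 3 + 1 = r - 2 from by omega]
        rcases hrep with h | h
        · omega
        · exact h
  case hj =>
    intro i hi
    simp only [Finset.mem_filter, Finset.mem_range, predRun] at hi
    obtain ⟨hilen, h1, hcond⟩ := hi
    simp only [RepFin, Finset.mem_filter, Finset.mem_range]
    refine ⟨by omega, by omega, ?_, ?_⟩
    · rw [show i + 2 - 1 = i + 1 from by omega, ← getD_mid α i (by omega)]
      exact h1
    · by_cases hi0 : i = 0
      · left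
        omega
      · right
        rw [if_neg hi0] at hcond
        rw [show i + 2 - 2 = i - 1 + 1 from by omega, ← getD_mid α (i - 1) (by omega)]
        exact hcond
  case hl =>
    intro r hr
    simp only [RepFin, Finset.mem_filter, Finset.mem_range] at hr
    show r - 2 + 2 = r
    omega
  case hr =>
    intro i hi
    show i + 2 - 2 = i
    omega

/-- Lemma 3.15: the ribbon diagram of `α` has exactly `k - δ_α` cells with at
least two cells above them in the same column, and these cells occur in exactly
`S'` distinct columns. -/
theorem deep_cells_count
    (α : List ℕ) (hα : IsComposition α)
    (hα1 : α ≠ List.replicate α.length 1) :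
    Set.ncard (deepCells α) = α.count 1 - deltaEnds α ∧
    Set.ncard (Prod.snd '' deepCells α) = S'count α := by
  constructor
  · rw [ncard_deep α hα, Tfin_card α, count_tail_dropLast α hα1]
  · rw [ncard_snd_deep α hα, RepFin_card α, S'_eq_runs α hα1]

end RibbonNearEq
end

section
/- Let α and β be compositions of equal size N and equal length R, both different from 1^R, with λ(α) = λ(β), δ_α = δ_β, α_1 ≤ α_R, and β_1 ≤ β_R. If α_1 < β_1, then |E_{α,ε_0(α)}| = |E_{β,ε_0(α)}| + 1 + χ(α_1 = α_R). -/
namespace RibbonNearEq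

/-- `ε(α) = (z_1 - 2 + χ(p_1 = 0)) (z_2 - 2) ⋯ (z_{R-k-1} - 2)
(z_{R-k} - 2 + χ(p_{R-k+1} = 0))`, where `z_1, …, z_{R-k}` are the parts of `α`
that are at least `2`; `p_1 = 0` iff `α` starts with a part `≠ 1`, and
`p_{R-k+1} = 0` iff `α` ends with a part `≠ 1`. -/
def epsList (α : List ℕ) : List ℕ :=
  let e := (α.filter fun x => decide (x ≠ 1)).map fun z => z - 2
  let e1 := if α.headI ≠ 1 then e.set 0 (e.getD 0 0 + 1) else e
  if α.getLastD 0 ≠ 1 then e1.set (e1.length - 1) (e1.getD (e1.length - 1) 0 + 1) else e1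

/-- `E_{α,M}`: lattice points `(x_1, …, x_{R-k-1})` with `Σ x_i = M` and
`0 ≤ x_i ≤ ε_i(α)` for `1 ≤ i ≤ R-k-1`. -/
def Eset (α : List ℕ) (M : ℕ) : Set (List ℤ) :=
  {x | x.length = (epsList α).length - 1 ∧ x.sum = (M : ℤ) ∧
       ∀ i < x.length, 0 ≤ x.getD i 0 ∧ x.getD i 0 ≤ ((epsList α).getD (i + 1) 0 : ℤ)}

open Polynomial Finset in
/-- Product of `1 + X + ⋯ + X^c` over a multiset of capacities. -/
noncomputable def boxPoly (V : Multiset ℕ) : Polynomial ℕ :=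
  (V.map fun c => ∑ i ∈ Finset.range (c + 1), (Polynomial.X : Polynomial ℕ) ^ i).prod

/-- Number of integer points in the box with coordinate sum `M`. -/
noncomputable def cnt (V : Multiset ℕ) (M : ℕ) : ℕ := (boxPoly V).coeff M

lemma coeff_sumX (c k : ℕ) :
    (∑ i ∈ Finset.range (c + 1), (Polynomial.X : Polynomial ℕ) ^ i).coeff k
      = if k ≤ c then 1 else 0 := by
  rw [Polynomial.finset_sum_coeff]
  simp only [Polynomial.coeff_X_pow]
  rw [Finset.sum_ite_eq (Finset.range (c+1)) k (fun _ => (1:ℕ))]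
  simp [Nat.lt_succ_iff]

lemma cnt_cons (c : ℕ) (V : Multiset ℕ) (M : ℕ) :
    cnt (c ::ₘ V) M = ∑ j ∈ Finset.range (min c M + 1), cnt V (M - j) := by
  unfold cnt boxPoly
  rw [Multiset.map_cons, Multiset.prod_cons, Polynomial.coeff_mul,
    Finset.Nat.sum_antidiagonal_eq_sum_range_succ_mk]
  simp only [coeff_sumX, ite_mul, one_mul, zero_mul]
  rw [show Finset.range (min c M + 1) = (Finset.range (M+1)).filter (· ≤ c) by
    ext x; simp; omega, Finset.sum_filter]

lemma cnt_zero (V : Multiset ℕ) : cnt V 0 = 1 := by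
  induction V using Multiset.induction with
  | empty => simp [cnt, boxPoly]
  | cons c V ih => rw [cnt_cons]; simp [ih]

lemma cnt_cons_trunc (c m : ℕ) (V : Multiset ℕ) :
    cnt (c ::ₘ V) m = cnt (min c m ::ₘ V) m := by
  rw [cnt_cons, cnt_cons, Nat.min_eq_left (Nat.min_le_right c m)]

lemma cnt_cons_ge {c m : ℕ} (h : m ≤ c) (V : Multiset ℕ) :
    cnt (c ::ₘ V) m = cnt (m ::ₘ V) m := by
  rw [cnt_cons_trunc, Nat.min_eq_right h]

lemma cnt_truncmap (V W : Multiset ℕ) (M : ℕ) :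
    cnt (V.map (fun c => min c M) + W) M = cnt (V + W) M := by
  induction V using Multiset.induction generalizing W with
  | empty => simp
  | cons c V ih =>
      rw [Multiset.map_cons, Multiset.cons_add, ← cnt_cons_trunc,
        ← Multiset.add_cons, ih, Multiset.add_cons, Multiset.cons_add]

/-- Number of points with coordinate sum at most `M` (extra slack coordinate). -/
noncomputable def cntLe (V : Multiset ℕ) (M : ℕ) : ℕ := cnt (M ::ₘ V) M

lemma cntLe_step (T : Multiset ℕ) (M : ℕ) (hM : 1 ≤ M) :
    cntLe (M ::ₘ T) M = cntLe ((M-1) ::ₘ T) M + 1 := by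
  unfold cntLe
  rw [Multiset.cons_swap, cnt_cons, Multiset.cons_swap M (M-1) T, cnt_cons,
    Nat.min_self, Nat.min_eq_left (Nat.sub_le M 1)]
  have : M - 1 + 1 = M := Nat.succ_pred_eq_of_pos hM
  rw [this, Finset.sum_range_succ, Nat.sub_self, cnt_zero]

lemma cntLe_truncmap (V : Multiset ℕ) (M : ℕ) :
    cntLe V M = cntLe (V.map (fun c => min c M)) M := by
  unfold cntLe
  rw [show (M ::ₘ V : Multiset ℕ) = V + {M} by rw [add_comm, Multiset.singleton_add],
    show (M ::ₘ V.map (fun c => min c M) : Multiset ℕ) = V.map (fun c => min c M) + {M} by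
      rw [add_comm, Multiset.singleton_add],
    cnt_truncmap]

lemma key1 (X Y : Multiset ℕ) (M : ℕ) (hM : 1 ≤ M)
    (h : (M-1) ::ₘ X = M ::ₘ Y) : cntLe X M = cntLe Y M + 1 := by
  have hmem : M ∈ X := by
    have h1 : M ∈ (M-1) ::ₘ X := by rw [h]; exact Multiset.mem_cons_self M Y
    rcases Multiset.mem_cons.mp h1 with h2 | h2
    · omega
    · exact h2
  have hX : X = M ::ₘ X.erase M := (Multiset.cons_erase hmem).symm
  have hY : Y = (M-1) ::ₘ X.erase M := by
    have h' := h
    rw [hX, Multiset.cons_swap] at h'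
    exact ((Multiset.cons_inj_right M).mp h').symm
  rw [hX, hY, cntLe_step _ _ hM]

lemma key2 (X Y : Multiset ℕ) (M : ℕ) (hM : 1 ≤ M)
    (h : (M-1) ::ₘ (M-1) ::ₘ X = M ::ₘ M ::ₘ Y) : cntLe X M = cntLe Y M + 2 := by
  have hmem : M ∈ X := by
    have h1 : M ∈ (M-1) ::ₘ (M-1) ::ₘ X := by rw [h]; exact Multiset.mem_cons_self M _
    rcases Multiset.mem_cons.mp h1 with h2 | h2
    · omega
    rcases Multiset.mem_cons.mp h2 with h3 | h3
    · omega
    · exact h3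
  have hX : X = M ::ₘ X.erase M := (Multiset.cons_erase hmem).symm
  have h' := h
  rw [hX, Multiset.cons_swap (M-1) M (X.erase M),
    Multiset.cons_swap (M-1) M ((M-1) ::ₘ X.erase M)] at h'
  have h'' : (M-1) ::ₘ (M-1) ::ₘ X.erase M = M ::ₘ Y :=
    (Multiset.cons_inj_right M).mp h'
  have hk := key1 ((M-1) ::ₘ X.erase M) Y M hM h''
  rw [hX, cntLe_step _ _ hM, hk]

def boxSet (caps : List ℕ) (M : ℕ) : Set (List ℤ) :=
  {x | x.length = caps.length ∧ x.sum = (M : ℤ) ∧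
    ∀ i < x.length, 0 ≤ x.getD i 0 ∧ x.getD i 0 ≤ (caps.getD i 0 : ℤ)}

def boxFinset : List ℕ → ℕ → Finset (List ℤ)
  | [], M => if M = 0 then {([] : List ℤ)} else ∅
  | c :: caps, M => (Finset.range (min c M + 1)).biUnion fun j =>
      (boxFinset caps (M - j)).image (fun xs => (j : ℤ) :: xs)

lemma getD_all_of_lt {l : List ℤ} {P : ℤ → Prop} (h : ∀ i < l.length, P (l.getD i 0)) :
    ∀ x ∈ l, P x := by
  intro x hx
  obtain ⟨i, hi, rfl⟩ := List.mem_iff_getElem.mp hx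
  have := h i hi
  rwa [List.getD_eq_getElem l 0 hi] at this

lemma coe_boxFinset (caps : List ℕ) (M : ℕ) :
    (boxFinset caps M : Set (List ℤ)) = boxSet caps M := by
  induction caps generalizing M with
  | nil =>
      ext x
      simp only [boxFinset, boxSet, List.length_nil, List.length_eq_zero_iff, Set.mem_setOf_eq]
      constructor
      · intro hx
        split at hx <;> simp_all
      · rintro ⟨rfl, h2, -⟩
        simp at h2
        split
        · simp
        · omega
  | cons c caps ih =>
      ext x
      simp only [boxFinset, Finset.coe_biUnion, Finset.mem_coe, Finset.mem_range,
        Set.mem_iUnion, Finset.mem_image, boxSet, Set.mem_setOf_eq]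
      constructor
      · rintro ⟨j, hj, xs, hxs, rfl⟩
        have hj' : j ≤ min c M := Nat.lt_succ_iff.mp hj
        have hxs' : xs ∈ boxSet caps (M - j) := by rw [← ih]; exact hxs
        obtain ⟨hlen, hsum, hbd⟩ := hxs'
        refine ⟨by simp [hlen], ?_, ?_⟩
        · have hjM : j ≤ M := le_trans hj' (Nat.min_le_right c M)
          simp only [List.sum_cons, hsum]
          push_cast [Nat.cast_sub hjM]
          ring
        · intro i hi
          cases i with
          | zero =>
              simp only [List.getD_cons_zero]
              exact ⟨Int.ofNat_nonneg j, by exact_mod_cast le_trans hj' (Nat.min_le_left c M)⟩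
          | succ i =>
              simp only [List.getD_cons_succ]
              exact hbd i (by simpa using hi)
      · rintro ⟨hlen, hsum, hbd⟩
        cases x with
        | nil => simp at hlen
        | cons x0 xs =>
            have hbd0 := hbd 0 (by simp)
            simp only [List.getD_cons_zero] at hbd0
            have hxs_nonneg : 0 ≤ xs.sum := by
              apply List.sum_nonneg
              apply getD_all_of_lt (P := fun z => 0 ≤ z)
              intro i hi
              exact (hbd (i+1) (by simpa using Nat.succ_lt_succ hi)).1
            have hsum' : x0 + xs.sum = (M : ℤ) := by simpa using hsum
            have hx0M : x0 ≤ (M : ℤ) := by omega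
            refine ⟨x0.toNat, ?_, xs, ?_, ?_⟩
            · rw [Nat.lt_succ_iff, Nat.le_min]
              constructor
              · exact_mod_cast (Int.toNat_le.mpr hbd0.2 : x0.toNat ≤ (c:ℤ).toNat).trans_eq
                  (Int.toNat_natCast c)
              · exact_mod_cast (Int.toNat_le.mpr hx0M : x0.toNat ≤ (M:ℤ).toNat).trans_eq
                  (Int.toNat_natCast M)
            · rw [← Finset.mem_coe, ih]
              have hx0 : ((x0.toNat : ℤ)) = x0 := Int.toNat_of_nonneg hbd0.1
              have hle : x0.toNat ≤ M := by omega
              refine ⟨by simpa using hlen, ?_, ?_⟩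
              · rw [Nat.cast_sub hle, hx0]; omega
              · intro i hi
                have := hbd (i+1) (by simpa using Nat.succ_lt_succ hi)
                simpa using this
            · have hx0 : ((x0.toNat : ℤ)) = x0 := Int.toNat_of_nonneg hbd0.1
              rw [hx0]

lemma card_boxFinset (caps : List ℕ) (M : ℕ) :
    (boxFinset caps M).card = cnt (↑caps) M := by
  induction caps generalizing M with
  | nil =>
      have h0 : ((↑([] : List ℕ) : Multiset ℕ)) = 0 := rfl
      rw [h0]
      simp only [boxFinset, cnt, boxPoly, Multiset.map_zero, Multiset.prod_zero,
        Polynomial.coeff_one]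
      split <;> simp_all
  | cons c caps ih =>
      have hcoe : ((↑(c :: caps) : Multiset ℕ)) = c ::ₘ (↑caps) := rfl
      rw [hcoe, cnt_cons]
      rw [boxFinset, Finset.card_biUnion]
      · apply Finset.sum_congr rfl
        intro j _
        rw [Finset.card_image_of_injective _ (List.cons_injective), ih]
      · intro i _ j _ hij
        rw [Function.onFun, Finset.disjoint_left]
        intro y hy1 hy2
        simp only [Finset.mem_image] at hy1 hy2
        obtain ⟨xs, -, rfl⟩ := hy1
        obtain ⟨ys, -, hy⟩ := hy2
        apply hij
        have := (List.cons.injEq _ _ _ _).mp hy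
        exact_mod_cast this.1.symm

lemma ncard_boxSet (caps : List ℕ) (M : ℕ) :
    Set.ncard (boxSet caps M) = cnt (↑caps) M := by
  rw [← coe_boxFinset, Set.ncard_coe_finset, card_boxFinset]

lemma getD_tail_nat (l : List ℕ) (i : ℕ) : l.tail.getD i 0 = l.getD (i+1) 0 := by
  cases l <;> simp

lemma Eset_eq_boxSet (γ : List ℕ) (M : ℕ) : Eset γ M = boxSet (epsList γ).tail M := by
  unfold Eset boxSet
  ext x
  simp only [Set.mem_setOf_eq, List.length_tail, getD_tail_nat]

lemma headI_mem {l : List ℕ} (h : l ≠ []) : l.headI ∈ l := by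
  cases l with
  | nil => exact absurd rfl h
  | cons a t => simp

lemma getLastD_concat' (l : List ℕ) (y d : ℕ) : (l ++ [y]).getLastD d = y := by
  induction l generalizing d with
  | nil => rfl
  | cons a t ih => rw [List.cons_append, List.getLastD_cons, ih]

lemma set_at_length_concat (l : List ℕ) (y v : ℕ) : (l ++ [y]).set l.length v = l ++ [v] := by
  induction l with
  | nil => rfl
  | cons a t ih => simp [ih]

lemma getD_at_length_concat (l : List ℕ) (y : ℕ) : (l ++ [y]).getD l.length 0 = y := by
  induction l with
  | nil => rfl
  | cons a t ih => simp [ih]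

lemma filter_struct (a b : ℕ) (mid : List ℕ) (ha : a ≠ 1) (hb : b ≠ 1) :
    (a :: (mid ++ [b])).filter (fun x => decide (x ≠ 1)) =
      a :: ((mid.filter (fun x => decide (x ≠ 1))) ++ [b]) := by
  rw [List.filter_cons_of_pos (by simp [ha]), List.filter_append]
  simp [hb]

lemma epsList_struct (a b : ℕ) (mid : List ℕ) (ha2 : 2 ≤ a) (hb2 : 2 ≤ b) :
    epsList (a :: (mid ++ [b])) =
      (a - 1) :: ((mid.filter (fun x => decide (x ≠ 1))).map (fun z => z - 2) ++ [b - 1]) := by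
  have ha : a ≠ 1 := by omega
  have hb : b ≠ 1 := by omega
  have hlast : (a :: (mid ++ [b])).getLastD 0 = b := by
    rw [show a :: (mid ++ [b]) = (a :: mid) ++ [b] by simp, getLastD_concat']
  set mm := (mid.filter (fun x => decide (x ≠ 1))).map (fun z => z - 2) with hmm
  unfold epsList
  simp only [List.headI, hlast, ne_eq, ha, hb, not_false_eq_true, if_true, if_pos,
    filter_struct a b mid ha hb, List.map_cons, List.map_append, List.map_singleton,
    List.map_nil]
  rw [← hmm]
  simp only [List.getD_cons_zero, List.set_cons_zero]
  have h1 : a - 2 + 1 = a - 1 := by omega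
  rw [h1]
  have hlen : ((a-1) :: (mm ++ [b-2])).length - 1 = mm.length + 1 := by simp
  rw [hlen]
  simp only [List.getD_cons_succ, List.set_cons_succ, getD_at_length_concat,
    set_at_length_concat]
  have h2 : b - 2 + 1 = b - 1 := by omega
  rw [h2]

/-- Lemma 3.18, part (1): if `α_1 < β_1` then
`|E_{α,ε_0(α)}| = |E_{β,ε_0(α)}| + 1 + χ(α_1 = α_R)`. -/
theorem Eset_compare_first_ends
    (α β : List ℕ)
    (hα : IsComposition α) (hβ : IsComposition β)
    (hα1 : α ≠ List.replicate α.length 1) (hβ1 : β ≠ List.replicate β.length 1)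
    (hsz : α.sum = β.sum) (hlen : α.length = β.length)
    (hlam : (↑α : Multiset ℕ) = (↑β : Multiset ℕ))
    (hdelta : deltaEnds α = deltaEnds β)
    (hαe : α.headI ≤ α.getLastD 0) (hβe : β.headI ≤ β.getLastD 0)
    (h1 : α.headI < β.headI) :
    Set.ncard (Eset α ((epsList α).getD 0 0)) =
      Set.ncard (Eset β ((epsList α).getD 0 0)) + 1 +
        (if α.headI = α.getLastD 0 then 1 else 0) := by

  classical
  have hαne : α ≠ [] := by
    intro h; exact hα1 (by simp [h])
  have hβne : β ≠ [] := by
    intro h; exact hβ1 (by simp [h])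
  have hperm0 : α.Perm β := Multiset.coe_eq_coe.mp hlam
  have ha2 : 2 ≤ α.headI := by
    by_contra hcon
    push_neg at hcon
    have hpos : 0 < α.headI := hα _ (headI_mem hαne)
    have heq : α.headI = 1 := by omega
    have hc1 : β.headI ≠ 1 := by omega
    have hd1 : β.getLastD 0 ≠ 1 := by
      have : β.headI ≤ β.getLastD 0 := hβe
      omega
    unfold deltaEnds at hdelta
    split_ifs at hdelta <;> omega
  -- decompose α
  have hcβ : β.headI ∈ β := headI_mem hβne
  have hcα : β.headI ∈ α := hperm0.mem_iff.mpr hcβ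
  obtain ⟨a, t, rfl⟩ : ∃ a t, α = a :: t := by
    cases α with
    | nil => exact absurd rfl hαne
    | cons a t => exact ⟨a, t, rfl⟩
  have htne : t ≠ [] := by
    rintro rfl
    simp only [List.mem_singleton, List.mem_cons, List.not_mem_nil, or_false] at hcα
    simp only [List.headI_cons] at h1
    omega
  obtain ⟨mid, b, rfl⟩ := t.eq_nil_or_concat'.resolve_left htne
  -- decompose β
  have haα : a ∈ (a :: (mid ++ [b])) := List.mem_cons_self
  have haβ : a ∈ β := hperm0.mem_iff.mp haα
  obtain ⟨c, s, rfl⟩ : ∃ c s, β = c :: s := by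
    cases β with
    | nil => exact absurd rfl hβne
    | cons c s => exact ⟨c, s, rfl⟩
  have hsne : s ≠ [] := by
    rintro rfl
    simp only [List.mem_singleton, List.mem_cons, List.not_mem_nil, or_false] at haβ
    simp only [List.headI_cons] at h1
    omega
  obtain ⟨midβ, d, rfl⟩ := s.eq_nil_or_concat'.resolve_left hsne
  -- basic numeric facts
  have hgb : (a :: (mid ++ [b])).getLastD 0 = b := by
    rw [show a :: (mid ++ [b]) = (a :: mid) ++ [b] by simp, getLastD_concat']
  have hgd : (c :: (midβ ++ [d])).getLastD 0 = d := by
    rw [show c :: (midβ ++ [d]) = (c :: midβ) ++ [d] by simp, getLastD_concat']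
  simp only [List.headI_cons] at ha2 h1 hαe hβe ⊢
  rw [hgb] at hαe ⊢
  rw [hgd] at hβe
  have hab : a ≤ b := hαe
  have hb2 : 2 ≤ b := le_trans ha2 hab
  have hac : a < c := h1
  have hcd : c ≤ d := hβe
  have hc2 : 2 ≤ c := by omega
  have hd2 : 2 ≤ d := by omega
  -- rewrite the goal into `cnt` form
  rw [Eset_eq_boxSet, Eset_eq_boxSet, epsList_struct a b mid ha2 hb2,
    epsList_struct c d midβ hc2 hd2]
  simp only [List.getD_cons_zero, List.tail_cons]
  rw [ncard_boxSet, ncard_boxSet]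
  set mα := (mid.filter (fun x => decide (x ≠ 1))).map (fun z => z - 2) with hmα
  set mβ := (midβ.filter (fun x => decide (x ≠ 1))).map (fun z => z - 2) with hmβ
  have e1 : (↑(mα ++ [b-1]) : Multiset ℕ) = (b-1) ::ₘ (↑mα : Multiset ℕ) :=
    Multiset.coe_eq_coe.mpr (List.perm_append_singleton _ _)
  have e2 : (↑(mβ ++ [d-1]) : Multiset ℕ) = (d-1) ::ₘ (↑mβ : Multiset ℕ) :=
    Multiset.coe_eq_coe.mpr (List.perm_append_singleton _ _)
  rw [e1, e2, cnt_cons_ge (by omega : a - 1 ≤ b - 1), cnt_cons_ge (by omega : a - 1 ≤ d - 1)]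
  show cntLe (↑mα) (a-1) = cntLe (↑mβ) (a-1) + 1 + _
  -- the key multiset identity
  have hpf : ((a :: (mid ++ [b])).filter (fun x => decide (x ≠ 1))).Perm
      ((c :: (midβ ++ [d])).filter (fun x => decide (x ≠ 1))) := hperm0.filter _
  rw [filter_struct a b mid (by omega) (by omega),
    filter_struct c d midβ (by omega) (by omega)] at hpf
  have hpm := hpf.map (fun z => z - 2)
  simp only [List.map_cons, List.map_append, List.map_singleton, List.map_nil] at hpm
  rw [← hmα, ← hmβ] at hpm
  have h4 : (a-2) ::ₘ (b-2) ::ₘ (↑mα : Multiset ℕ)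
      = (c-2) ::ₘ (d-2) ::ₘ (↑mβ : Multiset ℕ) := by
    have i1 : ((a-2) :: (mα ++ [b-2])).Perm ((a-2) :: ((b-2) :: mα)) :=
      List.Perm.cons _ (List.perm_append_singleton _ _)
    have i2 : ((c-2) :: (mβ ++ [d-2])).Perm ((c-2) :: ((d-2) :: mβ)) :=
      List.Perm.cons _ (List.perm_append_singleton _ _)
    exact Multiset.coe_eq_coe.mpr ((i1.symm.trans hpm).trans i2)
  have h5 := congrArg (Multiset.map (fun x => min x (a-1))) h4
  simp only [Multiset.map_cons] at h5
  rw [cntLe_truncmap (↑mα) (a-1), cntLe_truncmap (↑mβ) (a-1)]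
  have hM1 : 1 ≤ a - 1 := by omega
  have hga : min (a-2) (a-1) = (a-1) - 1 := by omega
  have hgc : min (c-2) (a-1) = a - 1 := by omega
  have hgd' : min (d-2) (a-1) = a - 1 := by omega
  by_cases hcase : a = b
  · show _ = _ + 1 + @ite ℕ (a = b) (instDecidableEqNat a b) 1 0
    rw [if_pos hcase]
    have hgb' : min (b-2) (a-1) = (a-1) - 1 := by omega
    rw [hga, hgb', hgc, hgd'] at h5
    have := key2 ((↑mα : Multiset ℕ).map (fun c => min c (a-1)))
      ((↑mβ : Multiset ℕ).map (fun c => min c (a-1))) (a-1) hM1 h5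
    omega
  · show _ = _ + 1 + @ite ℕ (a = b) (instDecidableEqNat a b) 1 0
    rw [if_neg hcase]
    have hab' : a < b := by omega
    have hgb' : min (b-2) (a-1) = a - 1 := by omega
    rw [hga, hgb', hgc, hgd'] at h5
    rw [Multiset.cons_swap] at h5
    have h6 := (Multiset.cons_inj_right (a-1)).mp h5
    have := key1 ((↑mα : Multiset ℕ).map (fun c => min c (a-1)))
      ((↑mβ : Multiset ℕ).map (fun c => min c (a-1))) (a-1) hM1 h6
    omega

end RibbonNearEq
end
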